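/- Let f : G → H be a semi-planar function between finite abelian groups of the same even order k. Then in the incidence structure S(G,H;f): any two distinct points are incident with either 0 or exactly 2 common lines; any two distinct lines are incident with either 0 or exactly 2 common points; every point is incident with exactly k lines; and every line is incident with exactly k points. -/

import Mathlib

/-- A function `f : G → H` is *semi-planar* if for every nonzero `a : G` and every
`y : H`, the equation `f (x + a) - f x = y` has either 0 or exactly 2 solutions. -/
def IsSemiPlanar {G H : Type*} [AddGroup G] [AddGroup H] (f : G → H) : Prop :=
  ∀ a : G, a ≠ 0 → ∀ y : H,
    Nat.card {x : G // f (x + a) - f x = y} = 0 ∨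
    Nat.card {x : G // f (x + a) - f x = y} = 2

/-- The point `p = (x, y)` is incident with the line `l = L(a, b)` iff `y = f (x - a) + b`. -/
def Incid {G H : Type*} [Sub G] [Add H] (f : G → H) (p l : G × H) : Prop :=
  p.2 = f (p.1 - l.1) + l.2

/-- The adjacency relation of the incidence graph of `S(G,H;f)`: points on the left,
lines on the right, a point adjacent to a line iff incident. -/
def IncAdj {G H : Type*} [Sub G] [Add H] (f : G → H) :
    (G × H) ⊕ (G × H) → (G × H) ⊕ (G × H) → Prop
  | Sum.inl p, Sum.inr l => Incid f p l
  | Sum.inr l, Sum.inl p => Incid f p l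
  | _, _ => False

/-- The incidence graph of `S(G,H;f)`. -/
def incGraph {G H : Type*} [Sub G] [Add H] (f : G → H) :
    SimpleGraph ((G × H) ⊕ (G × H)) where
  Adj := IncAdj f
  symm := by
    refine ⟨fun v w h => ?_⟩
    cases v <;> cases w <;> exact h
  loopless := by
    refine ⟨fun v h => ?_⟩
    cases v <;> exact h

/-- The line `L(a,b)` belongs to the substructure `S₁`, i.e. lies in the same
connected component of the incidence graph as the line `L(0,0)`. -/
def InS1 {G H : Type*} [SubtractionMonoid G] [SubNegMonoid H] (f : G → H) (l : G × H) : Prop :=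
  (incGraph f).Reachable (Sum.inr l) (Sum.inr ((0 : G), (0 : H)))

/-- In `S(G,H;f)` for a semi-planar `f` between finite abelian groups of the same even
order `k`: two distinct points lie on 0 or exactly 2 common lines, two distinct lines
meet in 0 or exactly 2 common points, every point lies on exactly `k` lines, and every
line contains exactly `k` points. -/
theorem sbp_properties {G H : Type*} [AddCommGroup G] [AddCommGroup H]
    [Fintype G] [Fintype H]
    (hcard : Fintype.card G = Fintype.card H) (heven : Even (Fintype.card G))
    (f : G → H) (hf : IsSemiPlanar f) :
    (∀ p q : G × H, p ≠ q →
      Nat.card {l : G × H // Incid f p l ∧ Incid f q l} = 0 ∨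
      Nat.card {l : G × H // Incid f p l ∧ Incid f q l} = 2) ∧
    (∀ l m : G × H, l ≠ m →
      Nat.card {p : G × H // Incid f p l ∧ Incid f p m} = 0 ∨
      Nat.card {p : G × H // Incid f p l ∧ Incid f p m} = 2) ∧
    (∀ p : G × H, Nat.card {l : G × H // Incid f p l} = Fintype.card G) ∧
    (∀ l : G × H, Nat.card {p : G × H // Incid f p l} = Fintype.card G) := by

  refine ⟨?_, ?_, ?_, ?_⟩
  · -- two distinct points
    intro p q hpq
    by_cases h : p.1 = q.1
    · left
      have : IsEmpty {l : G × H // Incid f p l ∧ Incid f q l} := by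
        constructor
        rintro ⟨l, h1, h2⟩
        exact hpq (Prod.ext h (by rw [h1, h2, h]))
      exact Nat.card_of_isEmpty
    · have e : {l : G × H // Incid f p l ∧ Incid f q l} ≃
          {u : G // f (u + (p.1 - q.1)) - f u = p.2 - q.2} :=
      { toFun := fun l => ⟨q.1 - l.1.1, by
          obtain ⟨⟨a, b⟩, h1, h2⟩ := l
          simp only [Incid] at h1 h2
          have hx : q.1 - a + (p.1 - q.1) = p.1 - a := by abel
          rw [hx, h1, h2]; abel⟩
        invFun := fun u => ⟨(q.1 - u.1, q.2 - f u.1), by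
          obtain ⟨u, hu⟩ := u
          rw [sub_eq_iff_eq_add] at hu
          constructor
          · show p.2 = f (p.1 - (q.1 - u)) + (q.2 - f u)
            have hx : p.1 - (q.1 - u) = u + (p.1 - q.1) := by abel
            rw [hx, hu]; abel
          · show q.2 = f (q.1 - (q.1 - u)) + (q.2 - f u)
            have hx : q.1 - (q.1 - u) = u := by abel
            rw [hx]; abel⟩
        left_inv := fun l => by
          obtain ⟨⟨a, b⟩, h1, h2⟩ := l
          simp only [Incid] at h2
          apply Subtype.ext
          apply Prod.ext
          · show q.1 - (q.1 - a) = a; abel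
          · show q.2 - f (q.1 - a) = b; rw [h2]; abel
        right_inv := fun u => by
          apply Subtype.ext
          show q.1 - (q.1 - u.1) = u.1; abel }
      rw [Nat.card_congr e]
      exact hf (p.1 - q.1) (sub_ne_zero.mpr h) (p.2 - q.2)
  · -- two distinct lines
    intro l m hlm
    by_cases h : l.1 = m.1
    · left
      have : IsEmpty {p : G × H // Incid f p l ∧ Incid f p m} := by
        constructor
        rintro ⟨p, h1, h2⟩
        apply hlm
        refine Prod.ext h ?_
        have := h1.symm.trans h2
        rw [h] at this
        exact add_left_cancel this
      exact Nat.card_of_isEmpty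
    · have e : {p : G × H // Incid f p l ∧ Incid f p m} ≃
          {u : G // f (u + (m.1 - l.1)) - f u = m.2 - l.2} :=
      { toFun := fun p => ⟨p.1.1 - m.1, by
          obtain ⟨⟨x, y⟩, h1, h2⟩ := p
          simp only [Incid] at h1 h2
          have hx : x - m.1 + (m.1 - l.1) = x - l.1 := by abel
          have e1 : f (x - l.1) = y - l.2 := by rw [h1]; abel
          have e2 : f (x - m.1) = y - m.2 := by rw [h2]; abel
          rw [hx, e1, e2]; abel⟩
        invFun := fun u => ⟨(u.1 + m.1, f u.1 + m.2), by
          obtain ⟨u, hu⟩ := u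
          rw [sub_eq_iff_eq_add] at hu
          constructor
          · show f u + m.2 = f (u + m.1 - l.1) + l.2
            have hx : u + m.1 - l.1 = u + (m.1 - l.1) := by abel
            rw [hx, hu]; abel
          · show f u + m.2 = f (u + m.1 - m.1) + m.2
            have hx : u + m.1 - m.1 = u := by abel
            rw [hx]⟩
        left_inv := fun p => by
          obtain ⟨⟨x, y⟩, h1, h2⟩ := p
          simp only [Incid] at h2
          apply Subtype.ext
          apply Prod.ext
          · show x - m.1 + m.1 = x; abel
          · show f (x - m.1) + m.2 = y; rw [h2]
        right_inv := fun u => by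
          apply Subtype.ext
          show u.1 + m.1 - m.1 = u.1; abel }
      rw [Nat.card_congr e]
      exact hf (m.1 - l.1) (sub_ne_zero.mpr fun h' => h h'.symm) (m.2 - l.2)
  · -- lines through a point
    intro p
    have e : {l : G × H // Incid f p l} ≃ G :=
    { toFun := fun l => l.1.1
      invFun := fun a => ⟨(a, p.2 - f (p.1 - a)), by show p.2 = f (p.1 - a) + (p.2 - f (p.1 - a)); abel⟩
      left_inv := fun l => by
        obtain ⟨⟨a, b⟩, h1⟩ := l
        simp only [Incid] at h1
        apply Subtype.ext
        apply Prod.ext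
        · rfl
        · show p.2 - f (p.1 - a) = b; rw [h1]; abel
      right_inv := fun a => rfl }
    rw [Nat.card_congr e, Nat.card_eq_fintype_card]
  · -- points on a line
    intro l
    have e : {p : G × H // Incid f p l} ≃ G :=
    { toFun := fun p => p.1.1
      invFun := fun x => ⟨(x, f (x - l.1) + l.2), rfl⟩
      left_inv := fun p => by
        obtain ⟨⟨x, y⟩, h1⟩ := p
        simp only [Incid] at h1
        apply Subtype.ext
        apply Prod.ext
        · rfl
        · exact h1.symm
      right_inv := fun x => rfl }
    rw [Nat.card_congr e, Nat.card_eq_fintype_card]
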